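/- Let ε∈(0,1) and let f̄∈ℝ^{n_F}, ᾱ>0, β̄>0, κ̄∈ℝ, ρ̃∈ℝ satisfy: f̄/ᾱ∈F and ᾱ·ln(ε/2) ≥ Ψ₊(f̄,ᾱ) − ρ̃ + κ̄; and f̄/β̄∈F and β̄·ln(ε/2) ≥ Ψ₋(f̄,β̄) − ρ̃ − κ̄. Then for every x∈X and every Borel probability measure P on ℝ^{n_F} associated with x, Prob_{ω∼P}{ |⟨f̄,ω⟩ + κ̄ − G(x)| > ρ̃ } ≤ ε. -/

import Mathlib

open Matrix MeasureTheory Real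

noncomputable section

/-- `Ψ₊(f,α) = sup_{x∈𝒳} [α·Φ(f/α; A(x)) − G(x)]`, where `G(x) = ⟨g,x⟩ + c`. -/
def PsiPlus {nF nM nX : ℕ} (Φ : (Fin nF → ℝ) → (Fin nM → ℝ) → ℝ)
    (A : (Fin nX → ℝ) →ᵃ[ℝ] (Fin nM → ℝ)) (g : Fin nX → ℝ) (c : ℝ)
    (𝒳 : Set (Fin nX → ℝ)) (f : Fin nF → ℝ) (α : ℝ) : ℝ :=
  sSup ((fun x => α * Φ (α⁻¹ • f) (A x) - (g ⬝ᵥ x + c)) '' 𝒳)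

/-- `Ψ₋(f,β) = sup_{x∈𝒳} [β·Φ(−f/β; A(x)) + G(x)]`. -/
def PsiMinus {nF nM nX : ℕ} (Φ : (Fin nF → ℝ) → (Fin nM → ℝ) → ℝ)
    (A : (Fin nX → ℝ) →ᵃ[ℝ] (Fin nM → ℝ)) (g : Fin nX → ℝ) (c : ℝ)
    (𝒳 : Set (Fin nX → ℝ)) (f : Fin nF → ℝ) (β : ℝ) : ℝ :=
  sSup ((fun x => β * Φ (-(β⁻¹ • f)) (A x) + (g ⬝ᵥ x + c)) '' 𝒳)

/-- A Borel probability measure `P` is associated with parameter `μ` if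
`∫ e^{⟨f,ω⟩} P(dω) ≤ e^{Φ(f;μ)}` for all `f ∈ F`
(i.e. `ln ∫ e^{⟨f,ω⟩} P(dω) ≤ Φ(f;μ)`). -/
def AssocWith {nF nM : ℕ} (Φ : (Fin nF → ℝ) → (Fin nM → ℝ) → ℝ)
    (F : Set (Fin nF → ℝ)) (μ : Fin nM → ℝ) (P : Measure (Fin nF → ℝ)) : Prop :=
  ∀ f ∈ F, ∫⁻ ω, ENNReal.ofReal (Real.exp (f ⬝ᵥ ω)) ∂P
    ≤ ENNReal.ofReal (Real.exp (Φ f μ))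

lemma chernoff {n : ℕ} (P : Measure (Fin n → ℝ)) [IsProbabilityMeasure P]
    (f0 : Fin n → ℝ) (C a : ℝ)
    (hint : ∫⁻ ω, ENNReal.ofReal (Real.exp (f0 ⬝ᵥ ω)) ∂P ≤ ENNReal.ofReal (Real.exp C)) :
    P {ω | a < f0 ⬝ᵥ ω} ≤ ENNReal.ofReal (Real.exp (C - a)) := by
  have hcont : Continuous fun ω : Fin n → ℝ => f0 ⬝ᵥ ω := by
    unfold dotProduct
    exact continuous_finset_sum _ fun i _ => continuous_const.mul (continuous_apply i)
  have hmeas : AEMeasurable (fun ω => ENNReal.ofReal (Real.exp (f0 ⬝ᵥ ω))) P :=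
    (ENNReal.measurable_ofReal.comp (Real.measurable_exp.comp hcont.measurable)).aemeasurable
  have hsub : {ω | a < f0 ⬝ᵥ ω} ⊆
      {ω | ENNReal.ofReal (Real.exp a) ≤ ENNReal.ofReal (Real.exp (f0 ⬝ᵥ ω))} := by
    intro ω hω
    exact ENNReal.ofReal_le_ofReal (Real.exp_le_exp.mpr (le_of_lt hω))
  have hmarkov := mul_meas_ge_le_lintegral₀ hmeas (ENNReal.ofReal (Real.exp a))
  have hane : ENNReal.ofReal (Real.exp a) ≠ 0 := by
    simp [ENNReal.ofReal_eq_zero, not_le, Real.exp_pos]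
  have hatop : ENNReal.ofReal (Real.exp a) ≠ ⊤ := ENNReal.ofReal_ne_top
  calc P {ω | a < f0 ⬝ᵥ ω}
      ≤ P {ω | ENNReal.ofReal (Real.exp a) ≤ ENNReal.ofReal (Real.exp (f0 ⬝ᵥ ω))} :=
        measure_mono hsub
    _ ≤ (∫⁻ ω, ENNReal.ofReal (Real.exp (f0 ⬝ᵥ ω)) ∂P) / ENNReal.ofReal (Real.exp a) :=
        (ENNReal.le_div_iff_mul_le (Or.inl hane) (Or.inl hatop)).mpr
          (by rw [mul_comm]; exact hmarkov)
    _ ≤ ENNReal.ofReal (Real.exp C) / ENNReal.ofReal (Real.exp a) :=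
        ENNReal.div_le_div_right hint _
    _ = ENNReal.ofReal (Real.exp (C - a)) := by
        rw [Real.exp_sub, ENNReal.ofReal_div_of_pos (Real.exp_pos a)]

/-- risk bound for the affine estimate built from a feasible solution
of the system (43). -/
theorem statement11 {nF nM nX : ℕ}
    (F : Set (Fin nF → ℝ)) (hFcl : IsClosed F) (hFconv : Convex ℝ F)
    (hFsymm : ∀ f ∈ F, -f ∈ F) (hF0 : 0 ∈ interior F)
    (M : Set (Fin nM → ℝ)) (hMcl : IsClosed M) (hMconv : Convex ℝ M)
    (Φ : (Fin nF → ℝ) → (Fin nM → ℝ) → ℝ)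
    (hΦcont : ContinuousOn (fun p : (Fin nF → ℝ) × (Fin nM → ℝ) => Φ p.1 p.2) (F ×ˢ M))
    (hΦconv : ∀ μ ∈ M, ConvexOn ℝ F (fun f => Φ f μ))
    (hΦconc : ∀ f ∈ F, ConcaveOn ℝ M (fun μ => Φ f μ))
    (𝒳 : Set (Fin nX → ℝ)) (h𝒳ne : 𝒳.Nonempty) (h𝒳conv : Convex ℝ 𝒳)
    (h𝒳cpt : IsCompact 𝒳)
    (X : Set (Fin nX → ℝ)) (hXne : X.Nonempty) (hX𝒳 : X ⊆ 𝒳)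
    (A : (Fin nX → ℝ) →ᵃ[ℝ] (Fin nM → ℝ)) (hA : ∀ x ∈ 𝒳, A x ∈ M)
    (g : Fin nX → ℝ) (c : ℝ) (ε : ℝ) (hε0 : 0 < ε) (hε1 : ε < 1)
    (fbar : Fin nF → ℝ) (αbar βbar κbar ρ : ℝ)
    (hα : 0 < αbar) (hαF : αbar⁻¹ • fbar ∈ F)
    (hβ : 0 < βbar) (hβF : βbar⁻¹ • fbar ∈ F)
    (hplus : PsiPlus Φ A g c 𝒳 fbar αbar - ρ + κbar ≤ αbar * Real.log (ε/2))
    (hminus : PsiMinus Φ A g c 𝒳 fbar βbar - ρ - κbar ≤ βbar * Real.log (ε/2))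
    (x : Fin nX → ℝ) (hx : x ∈ X)
    (P : Measure (Fin nF → ℝ)) [IsProbabilityMeasure P]
    (hassoc : AssocWith Φ F (A x) P) :
    P {ω | ρ < |fbar ⬝ᵥ ω + κbar - (g ⬝ᵥ x + c)|} ≤ ENNReal.ofReal ε := by
  set G : ℝ := g ⬝ᵥ x + c with hGdef
  have hx𝒳 : x ∈ 𝒳 := hX𝒳 hx
  have hε2 : (0:ℝ) < ε/2 := by linarith
  have hmβF : -(βbar⁻¹ • fbar) ∈ F := hFsymm _ hβF
  have hAcont : Continuous (A : (Fin nX → ℝ) → (Fin nM → ℝ)) :=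
    A.continuous_of_finiteDimensional
  have hGcont : Continuous fun y : Fin nX → ℝ => g ⬝ᵥ y + c := by
    unfold dotProduct
    exact (continuous_finset_sum _ fun i _ =>
      continuous_const.mul (continuous_apply i)).add continuous_const
  have hkey : ∀ f0 ∈ F, ContinuousOn (fun y => Φ f0 (A y)) 𝒳 := by
    intro f0 hf0
    exact hΦcont.comp ((continuous_const.prodMk hAcont).continuousOn)
      (fun y hy => ⟨hf0, hA y hy⟩)
  -- Ψ₊ bound at x
  have hsp : αbar * Φ (αbar⁻¹ • fbar) (A x) - G ≤ PsiPlus Φ A g c 𝒳 fbar αbar := by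
    unfold PsiPlus
    apply le_csSup
    · exact h𝒳cpt.bddAbove_image
        ((continuousOn_const.mul (hkey _ hαF)).sub hGcont.continuousOn)
    · exact ⟨x, hx𝒳, rfl⟩
  have hsm : βbar * Φ (-(βbar⁻¹ • fbar)) (A x) + G ≤ PsiMinus Φ A g c 𝒳 fbar βbar := by
    unfold PsiMinus
    apply le_csSup
    · exact h𝒳cpt.bddAbove_image
        ((continuousOn_const.mul (hkey _ hmβF)).add hGcont.continuousOn)
    · exact ⟨x, hx𝒳, rfl⟩
  -- Chernoff bounds
  have hCp := chernoff P (αbar⁻¹ • fbar) (Φ (αbar⁻¹ • fbar) (A x))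
      ((ρ - κbar + G)/αbar) (hassoc _ hαF)
  have hCm := chernoff P (-(βbar⁻¹ • fbar)) (Φ (-(βbar⁻¹ • fbar)) (A x))
      ((ρ + κbar - G)/βbar) (hassoc _ hmβF)
  have hsetp : {ω : Fin nF → ℝ | (ρ - κbar + G)/αbar < (αbar⁻¹ • fbar) ⬝ᵥ ω}
      = {ω | ρ - κbar + G < fbar ⬝ᵥ ω} := by
    ext ω
    simp only [Set.mem_setOf_eq, smul_dotProduct, smul_eq_mul, inv_mul_eq_div]
    exact div_lt_div_iff_of_pos_right hα
  have hsetm : {ω : Fin nF → ℝ | (ρ + κbar - G)/βbar < (-(βbar⁻¹ • fbar)) ⬝ᵥ ω}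
      = {ω | ρ + κbar - G < -(fbar ⬝ᵥ ω)} := by
    ext ω
    simp only [Set.mem_setOf_eq, neg_dotProduct, smul_dotProduct, smul_eq_mul,
      inv_mul_eq_div, ← neg_div]
    exact div_lt_div_iff_of_pos_right hβ
  rw [hsetp] at hCp
  rw [hsetm] at hCm
  -- real bounds on the exponents
  have hexpp : Real.exp (Φ (αbar⁻¹ • fbar) (A x) - (ρ - κbar + G)/αbar) ≤ ε/2 := by
    have h1 : αbar * Φ (αbar⁻¹ • fbar) (A x) - (ρ - κbar + G) ≤ αbar * Real.log (ε/2) := by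
      linarith
    have h2 : Φ (αbar⁻¹ • fbar) (A x) - (ρ - κbar + G)/αbar ≤ Real.log (ε/2) := by
      rw [← mul_le_mul_iff_right₀ hα]
      calc αbar * (Φ (αbar⁻¹ • fbar) (A x) - (ρ - κbar + G)/αbar)
          = αbar * Φ (αbar⁻¹ • fbar) (A x) - (ρ - κbar + G) := by field_simp
        _ ≤ αbar * Real.log (ε/2) := h1
    calc Real.exp _ ≤ Real.exp (Real.log (ε/2)) := Real.exp_le_exp.mpr h2
      _ = ε/2 := Real.exp_log hε2
  have hexpm : Real.exp (Φ (-(βbar⁻¹ • fbar)) (A x) - (ρ + κbar - G)/βbar) ≤ ε/2 := by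
    have h1 : βbar * Φ (-(βbar⁻¹ • fbar)) (A x) - (ρ + κbar - G) ≤ βbar * Real.log (ε/2) := by
      linarith
    have h2 : Φ (-(βbar⁻¹ • fbar)) (A x) - (ρ + κbar - G)/βbar ≤ Real.log (ε/2) := by
      rw [← mul_le_mul_iff_right₀ hβ]
      calc βbar * (Φ (-(βbar⁻¹ • fbar)) (A x) - (ρ + κbar - G)/βbar)
          = βbar * Φ (-(βbar⁻¹ • fbar)) (A x) - (ρ + κbar - G) := by field_simp
        _ ≤ βbar * Real.log (ε/2) := h1
    calc Real.exp _ ≤ Real.exp (Real.log (ε/2)) := Real.exp_le_exp.mpr h2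
      _ = ε/2 := Real.exp_log hε2
  have hPp : P {ω | ρ - κbar + G < fbar ⬝ᵥ ω} ≤ ENNReal.ofReal (ε/2) :=
    hCp.trans (ENNReal.ofReal_le_ofReal hexpp)
  have hPm : P {ω | ρ + κbar - G < -(fbar ⬝ᵥ ω)} ≤ ENNReal.ofReal (ε/2) :=
    hCm.trans (ENNReal.ofReal_le_ofReal hexpm)
  have hsubU : {ω : Fin nF → ℝ | ρ < |fbar ⬝ᵥ ω + κbar - G|}
      ⊆ {ω | ρ - κbar + G < fbar ⬝ᵥ ω} ∪ {ω | ρ + κbar - G < -(fbar ⬝ᵥ ω)} := by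
    intro ω hω
    simp only [Set.mem_setOf_eq] at hω
    rcases lt_abs.mp hω with h | h
    · left; simp only [Set.mem_setOf_eq]; linarith
    · right; simp only [Set.mem_setOf_eq]; linarith
  calc P {ω | ρ < |fbar ⬝ᵥ ω + κbar - G|}
      ≤ P ({ω | ρ - κbar + G < fbar ⬝ᵥ ω} ∪ {ω | ρ + κbar - G < -(fbar ⬝ᵥ ω)}) :=
        measure_mono hsubU
    _ ≤ P {ω | ρ - κbar + G < fbar ⬝ᵥ ω} + P {ω | ρ + κbar - G < -(fbar ⬝ᵥ ω)} :=
        measure_union_le _ _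
    _ ≤ ENNReal.ofReal (ε/2) + ENNReal.ofReal (ε/2) := add_le_add hPp hPm
    _ = ENNReal.ofReal ε := by
        rw [← ENNReal.ofReal_add hε2.le hε2.le]; norm_num


end
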